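/- Let B be an N×N real matrix whose (h,k) block vanishes whenever h > k+1 (with respect to the partition d_0, …, d_r of N). Let h,k ∈ {0,…,r} with n := h−k ≥ 1. Then for any i ∈ {d̄_{h-1}+1,…,d̄_h} and j ∈ {d̄_{k-1}+1,…,d̄_k}, the (i,j) entry of the matrix exponential satisfies (e^{tB})_{ij} = O(t^n) as t → 0; more precisely (e^{tB})_{ij} = t^n (B^n)_{ij}/n! + O(t^{n+1}) as t → 0. -/

import Mathlib

open MeasureTheory Real Matrix Filter Topology

noncomputable section

namespace Paper

/-- Index embedding with modular wraparound (it is the natural embedding on valid indices). -/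
def idx (N : ℕ) (hN : 0 < N) (n : ℕ) : Fin N := ⟨n % N, Nat.mod_lt n hN⟩

/-- Partial sums `d̄ m = d_0 + ⋯ + d_{m-1}` of the block dimensions. -/
def dbar (dv : ℕ → ℕ) (m : ℕ) : ℕ := ∑ l ∈ Finset.range m, dv l

/-- Block index of a coordinate `i`. -/
def blk (r : ℕ) (dv : ℕ → ℕ) (i : ℕ) : ℕ :=
  ((Finset.range r).filter fun m => dbar dv (m + 1) ≤ i).card

/-- Anisotropic quasi-norm `|x|_B`. -/
def Bnorm (N r : ℕ) (dv : ℕ → ℕ) (x : Fin N → ℝ) : ℝ :=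
  ∑ j ∈ Finset.range (r + 1), ∑ i : Fin N,
    if dbar dv j ≤ (i : ℕ) ∧ (i : ℕ) < dbar dv (j + 1)
    then |x i| ^ ((1 : ℝ) / (2 * (j : ℝ) + 1)) else 0

/-- Homogeneous dimension `Q`. -/
def Qdim (r : ℕ) (dv : ℕ → ℕ) : ℕ := ∑ j ∈ Finset.range (r + 1), (2 * j + 1) * dv j

/-- Anisotropic dilation matrix `D(λ)`. -/
def Dil (N r : ℕ) (dv : ℕ → ℕ) (lam : ℝ) : Matrix (Fin N) (Fin N) ℝ :=
  Matrix.of fun i j => if i = j then lam ^ (2 * blk r dv (i : ℕ) + 1) else 0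

/-- `B`-length `[ν]_B` of a multi-index `ν`. -/
def nuB (N r : ℕ) (dv : ℕ → ℕ) (ν : Fin N → ℕ) : ℕ :=
  ∑ i : Fin N, (2 * blk r dv (i : ℕ) + 1) * ν i

/-- Partial derivative along the `i`-th coordinate direction (as a line derivative). -/
def pd (N : ℕ) (i : Fin N) (f : (Fin N → ℝ) → ℝ) (x : Fin N → ℝ) : ℝ :=
  lineDeriv ℝ f x (Pi.single i 1)

/-- Iterated partial derivative along the `i`-th coordinate. -/
def pdPow (N : ℕ) (i : Fin N) : ℕ → ((Fin N → ℝ) → ℝ) → (Fin N → ℝ) → ℝ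
  | 0 => fun f => f
  | n + 1 => fun f => pd N i (pdPow N i n f)

/-- Multi-index partial derivative `∂_x^ν`. -/
def pdMulti (N : ℕ) (ν : Fin N → ℕ) (f : (Fin N → ℝ) → ℝ) : (Fin N → ℝ) → ℝ :=
  (List.finRange N).foldr (fun i g => pdPow N i (ν i) g) f

/-- Gaussian kernel `g(C,z) = ((2π)^N det C)^{-1/2} exp(-⟨C⁻¹z,z⟩/2)`. -/
def gauss (N : ℕ) (C : Matrix (Fin N) (Fin N) ℝ) (z : Fin N → ℝ) : ℝ :=
  (Real.sqrt ((2 * π) ^ N * C.det))⁻¹ * Real.exp (-(1 / 2) * (C⁻¹.mulVec z ⬝ᵥ z))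

/-- The `N×N` matrix with `I_d` in the upper-left `d×d` block and zeros elsewhere. -/
def Emat (N d : ℕ) : Matrix (Fin N) (Fin N) ℝ :=
  Matrix.of fun i j => if (i : ℕ) = (j : ℕ) ∧ (i : ℕ) < d then 1 else 0

/-- The standing assumptions (Assumptions 1.1, 1.2, 1.3) of the paper. -/
structure Setting (N d : ℕ) where
  hd : 1 ≤ d
  hdN : d ≤ N
  hN : 0 < N
  /-- the time horizon `T̄` -/
  Tbar : ℝ
  hTbar : 0 < Tbar
  /-- the drift matrix `B` -/
  B : Matrix (Fin N) (Fin N) ℝ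
  /-- number of blocks minus one -/
  r : ℕ
  /-- block dimensions `d_0, …, d_r` -/
  dv : ℕ → ℕ
  hd0 : dv 0 = d
  hposdv : ∀ j ≤ r, 1 ≤ dv j
  hmono : ∀ j, j < r → dv (j + 1) ≤ dv j
  hsum : dbar dv (r + 1) = N
  /-- blocks `(h,k)` with `h > k+1` vanish -/
  hzero : ∀ k : ℕ, k + 1 ≤ r → ∀ i j : Fin N,
    dbar dv (k + 2) ≤ (i : ℕ) → (j : ℕ) < dbar dv (k + 1) → B i j = 0
  /-- the subdiagonal blocks `B_{k+1}` have maximal rank `d_{k+1}` -/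
  hrank : ∀ k, k < r →
    (Matrix.of fun (a : Fin (dv (k + 1))) (b : Fin (dv k)) =>
      B (idx N hN (dbar dv (k + 1) + a)) (idx N hN (dbar dv k + b))).rank = dv (k + 1)
  /-- second order coefficients `a_{ij}` -/
  a2 : Fin d → Fin d → ℝ → (Fin N → ℝ) → ℝ
  /-- first order coefficients `a_i` -/
  a1 : Fin d → ℝ → (Fin N → ℝ) → ℝ
  /-- zeroth order coefficient `a` -/
  a0 : ℝ → (Fin N → ℝ) → ℝ
  /-- ellipticity constant `μ` -/
  μ : ℝ
  hμ : 0 < μ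
  /-- Hölder exponent `α` -/
  α : ℝ
  hα0 : 0 < α
  hα1 : α ≤ 1
  /-- a bound for the `α`-Hölder norms of the coefficients -/
  M : ℝ
  hsymm : ∀ i j t x, a2 i j t x = a2 j i t x
  hmeas2 : ∀ i j, Measurable (Function.uncurry (a2 i j))
  hmeas1 : ∀ i, Measurable (Function.uncurry (a1 i))
  hmeas0 : Measurable (Function.uncurry a0)
  /-- coercivity on `ℝ^d`, for a.e. `t ∈ [0,T̄]` -/
  hell : ∀ᵐ t ∂(volume.restrict (Set.Icc (0 : ℝ) Tbar)), ∀ (x : Fin N → ℝ) (ξ : Fin d → ℝ),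
    μ⁻¹ * ∑ i, ξ i ^ 2 ≤ ∑ i, ∑ j, a2 i j t x * ξ i * ξ j ∧
    ∑ i, ∑ j, a2 i j t x * ξ i * ξ j ≤ μ * ∑ i, ξ i ^ 2
  /-- uniform boundedness of the coefficients, for a.e. `t ∈ [0,T̄]` -/
  hbd : ∀ᵐ t ∂(volume.restrict (Set.Icc (0 : ℝ) Tbar)), ∀ x : Fin N → ℝ,
    (∀ i j, |a2 i j t x| ≤ M) ∧ (∀ i, |a1 i t x| ≤ M) ∧ |a0 t x| ≤ M
  /-- uniform anisotropic `α`-Hölder continuity in `x`, for a.e. `t ∈ [0,T̄]` -/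
  hHold : ∀ᵐ t ∂(volume.restrict (Set.Icc (0 : ℝ) Tbar)), ∀ x y : Fin N → ℝ,
    (∀ i j, |a2 i j t x - a2 i j t y| ≤ M * Bnorm N r dv (x - y) ^ α) ∧
    (∀ i, |a1 i t x - a1 i t y| ≤ M * Bnorm N r dv (x - y) ^ α) ∧
    |a0 t x - a0 t y| ≤ M * Bnorm N r dv (x - y) ^ α

namespace Setting

variable {N d : ℕ}

/-- The matrix exponential `e^{tB}`. -/
def mexp (S : Setting N d) (t : ℝ) : Matrix (Fin N) (Fin N) ℝ :=
  NormedSpace.exp (t • S.B)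

/-- The covariance matrix `𝒞(t)` of the prototype Kolmogorov operator. -/
def CmatK (S : Setting N d) (t : ℝ) : Matrix (Fin N) (Fin N) ℝ :=
  Matrix.of fun i j => ∫ τ in (0 : ℝ)..t, (S.mexp (t - τ) * Emat N d * (S.mexp (t - τ))ᵀ) i j

/-- The Gaussian fundamental solution `Γ^δ(t,x;T,y)` of the prototype Kolmogorov operator. -/
def GammaK (S : Setting N d) (δ t : ℝ) (x : Fin N → ℝ) (T : ℝ) (y : Fin N → ℝ) : ℝ :=
  gauss N (δ • S.CmatK (T - t)) (y - (S.mexp (T - t)).mulVec x)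

/-- The frozen diffusion matrix `A^{(s,v)}(τ)`. -/
def Afroz (S : Setting N d) (s : ℝ) (v : Fin N → ℝ) (τ : ℝ) : Matrix (Fin N) (Fin N) ℝ :=
  Matrix.of fun i j =>
    if hi : (i : ℕ) < d then
      if hj : (j : ℕ) < d then S.a2 ⟨i, hi⟩ ⟨j, hj⟩ τ ((S.mexp (τ - s)).mulVec v) else 0
    else 0

/-- The frozen covariance matrix `𝒞^{(s,v)}(t,T)`. -/
def Cfroz (S : Setting N d) (s : ℝ) (v : Fin N → ℝ) (t T : ℝ) : Matrix (Fin N) (Fin N) ℝ :=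
  Matrix.of fun i j => ∫ τ in t..T, (S.mexp (T - τ) * S.Afroz s v τ * (S.mexp (T - τ))ᵀ) i j

/-- The frozen Gaussian kernel `Γ^{(s,v)}(t,x;T,y)`. -/
def Gfroz (S : Setting N d) (s : ℝ) (v : Fin N → ℝ) (t : ℝ) (x : Fin N → ℝ)
    (T : ℝ) (y : Fin N → ℝ) : ℝ :=
  gauss N (S.Cfroz s v t T) (y - (S.mexp (T - t)).mulVec x)

/-- The parametrix `𝐏(t,x;T,y) = Γ^{(T,y)}(t,x;T,y)`. -/
def Pmx (S : Setting N d) (t : ℝ) (x : Fin N → ℝ) (T : ℝ) (y : Fin N → ℝ) : ℝ :=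
  S.Gfroz T y t x T y

/-- Embedding of the first `d` coordinates. -/
def ci (S : Setting N d) (i : Fin d) : Fin N := Fin.castLE S.hdN i

/-- The operator `𝒜` (acting on the space variable, at time `t`). -/
def Aop (S : Setting N d) (t : ℝ) (u : (Fin N → ℝ) → ℝ) (x : Fin N → ℝ) : ℝ :=
  (1 / 2) * ∑ i : Fin d, ∑ j : Fin d, S.a2 i j t x * pd N (S.ci i) (pd N (S.ci j) u) x
    + ∑ i : Fin d, S.a1 i t x * pd N (S.ci i) u x + S.a0 t x * u x

/-- The frozen operator `𝒜^{(s,v)}` (acting on the space variable, at time `t`). -/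
def AopF (S : Setting N d) (s : ℝ) (v : Fin N → ℝ) (t : ℝ) (u : (Fin N → ℝ) → ℝ)
    (x : Fin N → ℝ) : ℝ :=
  (1 / 2) * ∑ i : Fin d, ∑ j : Fin d,
    S.a2 i j t ((S.mexp (t - s)).mulVec v) * pd N (S.ci i) (pd N (S.ci j) u) x

/-- The terms `φ_{k+1}` of the parametrix series (indexed from `0`). -/
def phiSeq (S : Setting N d) : ℕ → ℝ → (Fin N → ℝ) → ℝ → (Fin N → ℝ) → ℝ
  | 0 => fun t x T y =>
      S.Aop t (fun z => S.Pmx t z T y) x - S.AopF T y t (fun z => S.Pmx t z T y) x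
  | k + 1 => fun t x T y =>
      ∫ τ in t..T, ∫ η : Fin N → ℝ,
        (S.Aop t (fun z => S.Pmx t z τ η) x - S.AopF τ η t (fun z => S.Pmx t z τ η) x)
          * S.phiSeq k τ η T y

/-- The sum `φ = Σ_{k≥1} φ_k` of the parametrix series. -/
def phiSum (S : Setting N d) (t : ℝ) (x : Fin N → ℝ) (T : ℝ) (y : Fin N → ℝ) : ℝ :=
  ∑' k : ℕ, S.phiSeq k t x T y

/-- The correction term `Φ(t,x;T,y)`. -/
def PhiFn (S : Setting N d) (t : ℝ) (x : Fin N → ℝ) (T : ℝ) (y : Fin N → ℝ) : ℝ :=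
  ∫ τ in t..T, ∫ η : Fin N → ℝ, S.Pmx t x τ η * S.phiSum τ η T y

/-- The candidate fundamental solution `p = 𝐏 + Φ`. -/
def pFn (S : Setting N d) (t : ℝ) (x : Fin N → ℝ) (T : ℝ) (y : Fin N → ℝ) : ℝ :=
  S.Pmx t x T y + S.PhiFn t x T y

/-- `f ∈ L¹_loc([0,T); C_b(ℝ^N))`. -/
def LlocCb (N : ℕ) (T : ℝ) (f : ℝ → (Fin N → ℝ) → ℝ) : Prop :=
  (∀ t ∈ Set.Ico (0 : ℝ) T, Continuous (f t) ∧ ∃ C, ∀ x, |f t x| ≤ C) ∧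
  ∀ b ∈ Set.Ico (0 : ℝ) T, IntegrableOn (fun t => ⨆ x : Fin N → ℝ, |f t x|) (Set.Icc 0 b)

/-- Strong Lie solution (Definition 1.4) of `𝒜u + Yu = f` on `𝒮_T`. -/
def IsLieSolution (S : Setting N d) (T : ℝ) (u f : ℝ → (Fin N → ℝ) → ℝ) : Prop :=
  LlocCb N T f ∧
  ContinuousOn (fun q : ℝ × (Fin N → ℝ) => u q.1 q.2) (Set.Ioo 0 T ×ˢ Set.univ) ∧
  (∀ i : Fin d, LlocCb N T fun t => pd N (S.ci i) (u t)) ∧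
  (∀ i j : Fin d, LlocCb N T fun t => pd N (S.ci i) (pd N (S.ci j) (u t))) ∧
  ∀ t ∈ Set.Ioo (0 : ℝ) T, ∀ x : Fin N → ℝ, ∀ s ∈ Set.Ico t T,
    u s ((S.mexp (s - t)).mulVec x) =
      u t x - ∫ τ in t..s,
        (S.Aop τ (u τ) ((S.mexp (τ - t)).mulVec x) - f τ ((S.mexp (τ - t)).mulVec x))

/-- Fundamental solution of `𝒜 + Y` (Definition 1.5). -/
def IsFundamentalSolution (S : Setting N d)
    (q : ℝ → (Fin N → ℝ) → ℝ → (Fin N → ℝ) → ℝ) : Prop :=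
  ∀ T ∈ Set.Ioo (0 : ℝ) S.Tbar, ∀ y : Fin N → ℝ,
    S.IsLieSolution T (fun t x => q t x T y) (fun _ _ => 0) ∧
    ∀ g : (Fin N → ℝ) → ℝ, Continuous g → (∃ C, ∀ x, |g x| ≤ C) →
      Tendsto (fun p : ℝ × (Fin N → ℝ) => ∫ η : Fin N → ℝ, q p.1 p.2 T η * g η)
        (𝓝[(Set.Iio T) ×ˢ (Set.univ : Set (Fin N → ℝ))] (T, y)) (𝓝 (g y))

end Setting

section AuxA5

lemma dbar_mono_aux (dv : ℕ → ℕ) {a b : ℕ} (hab : a ≤ b) : dbar dv a ≤ dbar dv b :=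
  Finset.sum_le_sum_of_subset (Finset.range_subset_range.2 hab)

lemma exists_block_aux {N r : ℕ} {dv : ℕ → ℕ} (hsum : dbar dv (r + 1) = N) (s : Fin N) :
    ∃ ks, ks ≤ r ∧ dbar dv ks ≤ (s : ℕ) ∧ (s : ℕ) < dbar dv (ks + 1) := by
  have hs : (s : ℕ) < dbar dv (r + 1) := by rw [hsum]; exact s.isLt
  clear hsum
  induction r with
  | zero => exact ⟨0, le_refl 0, by simp [dbar], hs⟩
  | succ m ih =>
    by_cases hc : dbar dv (m + 1) ≤ (s : ℕ)
    · exact ⟨m + 1, le_refl _, hc, hs⟩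
    · obtain ⟨ks, h1, h2, h3⟩ := ih (lt_of_not_ge hc)
      exact ⟨ks, h1.trans (Nat.le_succ m), h2, h3⟩

lemma pow_block_zero_aux {N r : ℕ} {dv : ℕ → ℕ} (hsum : dbar dv (r + 1) = N)
    (B : Matrix (Fin N) (Fin N) ℝ)
    (hzero : ∀ h k : ℕ, h ≤ r → k ≤ r → k + 1 < h → ∀ i j : Fin N,
      dbar dv h ≤ (i : ℕ) → (i : ℕ) < dbar dv (h + 1) →
      dbar dv k ≤ (j : ℕ) → (j : ℕ) < dbar dv (k + 1) → B i j = 0) :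
    ∀ m (i j : Fin N) (h' k' : ℕ), h' ≤ r → k' ≤ r →
      dbar dv h' ≤ (i : ℕ) → (i : ℕ) < dbar dv (h' + 1) →
      dbar dv k' ≤ (j : ℕ) → (j : ℕ) < dbar dv (k' + 1) →
      k' + m < h' → (B ^ m) i j = 0 := by
  intro m
  induction m with
  | zero =>
    intro i j h' k' hh hk hi1 hi2 hj1 hj2 hlt
    have h2 : dbar dv (k' + 1) ≤ dbar dv h' := dbar_mono_aux dv (by omega)
    have hji : (j : ℕ) < (i : ℕ) := lt_of_lt_of_le hj2 (h2.trans hi1)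
    rw [pow_zero]
    exact Matrix.one_apply_ne (by intro e; rw [e] at hji; omega)
  | succ m ih =>
    intro i j h' k' hh hk hi1 hi2 hj1 hj2 hlt
    rw [pow_succ, Matrix.mul_apply]
    apply Finset.sum_eq_zero
    intro s _
    obtain ⟨ks, hksr, hs1, hs2⟩ := exists_block_aux hsum s
    by_cases hcase : k' + 1 < ks
    · rw [hzero ks k' hksr hk hcase s j hs1 hs2 hj1 hj2, mul_zero]
    · rw [ih i s h' ks hh hksr hi1 hi2 hs1 hs2 (by omega), zero_mul]

lemma pow_entry_bound_aux {N : ℕ} (B : Matrix (Fin N) (Fin N) ℝ) :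
    ∃ C : ℝ, 0 ≤ C ∧ ∀ m (i j : Fin N), |(B ^ m) i j| ≤ C ^ m := by
  set K : ℝ := ∑ p : Fin N, ∑ q : Fin N, |B p q| with hKdef
  have hK0 : 0 ≤ K := Finset.sum_nonneg fun p _ => Finset.sum_nonneg fun q _ => abs_nonneg _
  have hK : ∀ i j : Fin N, |B i j| ≤ K := by
    intro i j
    have h1 : |B i j| ≤ ∑ q : Fin N, |B i q| :=
      Finset.single_le_sum (f := fun q => |B i q|) (fun q _ => abs_nonneg _) (Finset.mem_univ j)
    exact h1.trans (Finset.single_le_sum (f := fun p => ∑ q : Fin N, |B p q|)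
      (fun p _ => Finset.sum_nonneg fun q _ => abs_nonneg _) (Finset.mem_univ i))
  set C : ℝ := (N : ℝ) * K + 1 with hCdef
  have hC0 : 0 ≤ C := by positivity
  refine ⟨C, hC0, ?_⟩
  intro m
  induction m with
  | zero =>
    intro i j
    rw [pow_zero, pow_zero]
    by_cases hij : i = j <;> simp [Matrix.one_apply, hij]
  | succ m ih =>
    intro i j
    rw [pow_succ, Matrix.mul_apply]
    calc |∑ s, (B ^ m) i s * B s j| ≤ ∑ s, |(B ^ m) i s * B s j| :=
          Finset.abs_sum_le_sum_abs _ _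
      _ ≤ ∑ _s : Fin N, C ^ m * K := by
          apply Finset.sum_le_sum; intro s _
          rw [abs_mul]
          exact mul_le_mul (ih i s) (hK s j) (abs_nonneg _) (by positivity)
      _ = (N : ℝ) * (C ^ m * K) := by
          rw [Finset.sum_const, Finset.card_univ, Fintype.card_fin, nsmul_eq_mul]
      _ = C ^ m * ((N : ℝ) * K) := by ring
      _ ≤ C ^ m * C := by
          apply mul_le_mul_of_nonneg_left _ (pow_nonneg hC0 m)
          rw [hCdef]; linarith
      _ = C ^ (m + 1) := (pow_succ C m).symm

lemma exp_entry_aux {N : ℕ} (B : Matrix (Fin N) (Fin N) ℝ) (i j : Fin N) (t : ℝ)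
    (hsm : Summable fun m : ℕ => ((m.factorial : ℝ)⁻¹) • (t • B) ^ m) :
    NormedSpace.exp (t • B) i j
      = ∑' m : ℕ, t ^ m * ((B ^ m) i j / (m.factorial : ℝ)) := by
  have h1 : NormedSpace.exp (t • B) = ∑' m : ℕ, ((m.factorial : ℝ)⁻¹) • (t • B) ^ m := by
    rw [NormedSpace.exp_eq_tsum ℝ]
  rw [h1]
  erw [tsum_apply hsm, tsum_apply (Pi.summable.1 hsm i)]
  apply tsum_congr
  intro m
  rw [smul_pow]
  simp [Matrix.smul_apply, smul_eq_mul]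
  ring

end AuxA5

set_option maxHeartbeats 4000000 in
/-- Lemma A.5: if `i` belongs to the `h`-th block and `j` to the `k`-th block with
`n = h − k ≥ 1`, then `(e^{tB})_{ij} = tⁿ (Bⁿ)_{ij}/n! + O(t^{n+1})`, in particular
`(e^{tB})_{ij} = O(tⁿ)`, as `t → 0`. -/
theorem stmt_13 (N r : ℕ) (dv : ℕ → ℕ) (hpos : ∀ j ≤ r, 1 ≤ dv j)
    (hsum : dbar dv (r + 1) = N) (B : Matrix (Fin N) (Fin N) ℝ)
    (hzero : ∀ h k : ℕ, h ≤ r → k ≤ r → k + 1 < h → ∀ i j : Fin N,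
      dbar dv h ≤ (i : ℕ) → (i : ℕ) < dbar dv (h + 1) →
      dbar dv k ≤ (j : ℕ) → (j : ℕ) < dbar dv (k + 1) → B i j = 0)
    (h k n : ℕ) (hh : h ≤ r) (hk : k ≤ r) (hn : k + n = h) (hn1 : 1 ≤ n)
    (i j : Fin N)
    (hi1 : dbar dv h ≤ (i : ℕ)) (hi2 : (i : ℕ) < dbar dv (h + 1))
    (hj1 : dbar dv k ≤ (j : ℕ)) (hj2 : (j : ℕ) < dbar dv (k + 1)) :
    (fun t : ℝ =>
        NormedSpace.exp (t • B) i j - t ^ n * (B ^ n) i j / (n.factorial : ℝ))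
      =O[nhds (0 : ℝ)] (fun t => t ^ (n + 1)) ∧
    (fun t : ℝ => NormedSpace.exp (t • B) i j) =O[nhds (0 : ℝ)] fun t => t ^ n := by
  classical
  obtain ⟨C, hC0, hC⟩ := pow_entry_bound_aux B
  set b : ℕ → ℝ := fun m => (B ^ m) i j / (m.factorial : ℝ) with hbdef
  have hfact : ∀ m : ℕ, (0 : ℝ) < (m.factorial : ℝ) := fun m => by
    exact_mod_cast m.factorial_pos
  have hbzero : ∀ m, m < n → b m = 0 := by
    intro m hm
    have hz := pow_block_zero_aux hsum B hzero m i j h k hh hk hi1 hi2 hj1 hj2 (by omega)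
    simp [hbdef, hz]
  have hbbd : ∀ m, |b m| ≤ C ^ m / (m.factorial : ℝ) := by
    intro m
    rw [hbdef]
    simp only
    rw [abs_div, abs_of_pos (hfact m)]
    gcongr
    exact hC m i j
  -- summability of the entry series
  have hentry : ∀ t : ℝ, ∀ p q : Fin N,
      Summable (fun m : ℕ => (((m.factorial : ℝ)⁻¹) • (t • B) ^ m) p q) := by
    intro t p q
    apply Summable.of_norm
    apply Summable.of_nonneg_of_le (fun m => norm_nonneg _) ?_
      (Real.summable_pow_div_factorial (|t| * C))
    intro m
    rw [smul_pow]
    simp only [Matrix.smul_apply, smul_eq_mul, Real.norm_eq_abs]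
    have h1 : |(m.factorial : ℝ)⁻¹ * (t ^ m * (B ^ m) p q)|
        = (m.factorial : ℝ)⁻¹ * (|t| ^ m * |(B ^ m) p q|) := by
      rw [abs_mul, abs_mul, abs_pow, abs_of_pos (inv_pos.2 (hfact m))]
    rw [h1]
    calc (m.factorial : ℝ)⁻¹ * (|t| ^ m * |(B ^ m) p q|)
        ≤ (m.factorial : ℝ)⁻¹ * (|t| ^ m * C ^ m) := by
          gcongr
          exact hC m p q
      _ = (|t| * C) ^ m / (m.factorial : ℝ) := by
          rw [mul_pow, div_eq_inv_mul]
  have habs : ∀ t : ℝ, Summable (fun m => |t ^ m * b m|) := by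
    intro t
    apply Summable.of_nonneg_of_le (fun m => abs_nonneg _) ?_
      (Real.summable_pow_div_factorial (|t| * C))
    intro m
    rw [abs_mul, abs_pow]
    calc |t| ^ m * |b m| ≤ |t| ^ m * (C ^ m / (m.factorial : ℝ)) := by
          gcongr
          exact hbbd m
      _ = (|t| * C) ^ m / (m.factorial : ℝ) := by rw [mul_pow]; ring
  have hcsum : ∀ t : ℝ, Summable (fun m => t ^ m * b m) := by
    intro t
    apply Summable.of_norm
    simpa [Real.norm_eq_abs, abs_mul, abs_pow] using habs t
  have hbabs : Summable (fun m => |b m|) := by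
    have := habs 1
    simpa using this
  have htail : Summable (fun m => |b (m + (n + 1))|) :=
    (summable_nat_add_iff (n + 1)).2 hbabs
  set M : ℝ := ∑' m, |b (m + (n + 1))| with hMdef
  have hM0 : 0 ≤ M := tsum_nonneg fun m => abs_nonneg _
  -- key identity
  have key : ∀ t : ℝ, NormedSpace.exp (t • B) i j - t ^ n * b n
      = ∑' m : ℕ, t ^ (m + (n + 1)) * b (m + (n + 1)) := by
    intro t
    rw [exp_entry_aux B i j t (Pi.summable.2 fun p => Pi.summable.2 fun q => hentry t p q)]
    have hsplit := Summable.sum_add_tsum_nat_add (f := fun m => t ^ m * b m) (n + 1) (hcsum t)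
    have hfin : ∑ m ∈ Finset.range (n + 1), t ^ m * b m = t ^ n * b n := by
      rw [Finset.sum_range_succ, Finset.sum_eq_zero, zero_add]
      intro m hm
      rw [hbzero m (Finset.mem_range.1 hm), mul_zero]
    rw [hfin] at hsplit
    linarith
  -- bound on the tail
  have hbound : ∀ t : ℝ, |t| ≤ 1 →
      |∑' m : ℕ, t ^ (m + (n + 1)) * b (m + (n + 1))| ≤ M * |t| ^ (n + 1) := by
    intro t ht
    have hsum2 : Summable fun m => |t ^ (m + (n + 1)) * b (m + (n + 1))| :=
      (summable_nat_add_iff (n + 1)).2 (habs t)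
    have hsum3 : Summable fun m => |t| ^ (n + 1) * |b (m + (n + 1))| := htail.mul_left _
    have step1 : |∑' m : ℕ, t ^ (m + (n + 1)) * b (m + (n + 1))|
        ≤ ∑' m : ℕ, |t ^ (m + (n + 1)) * b (m + (n + 1))| := by
      have := norm_tsum_le_tsum_norm (f := fun m => t ^ (m + (n + 1)) * b (m + (n + 1)))
        (by simpa only [Real.norm_eq_abs] using hsum2)
      simpa only [Real.norm_eq_abs] using this
    have step2 : ∑' m : ℕ, |t ^ (m + (n + 1)) * b (m + (n + 1))|
        ≤ ∑' m : ℕ, |t| ^ (n + 1) * |b (m + (n + 1))| := by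
      apply Summable.tsum_le_tsum _ hsum2 hsum3
      intro m
      rw [abs_mul, abs_pow, pow_add]
      calc |t| ^ m * |t| ^ (n + 1) * |b (m + (n + 1))|
          ≤ 1 * |t| ^ (n + 1) * |b (m + (n + 1))| := by
            gcongr
            exact pow_le_one₀ (abs_nonneg t) ht
        _ = |t| ^ (n + 1) * |b (m + (n + 1))| := by ring
    calc |∑' m : ℕ, t ^ (m + (n + 1)) * b (m + (n + 1))|
        ≤ ∑' m : ℕ, |t| ^ (n + 1) * |b (m + (n + 1))| := step1.trans step2
      _ = |t| ^ (n + 1) * M := by rw [tsum_mul_left]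
      _ = M * |t| ^ (n + 1) := mul_comm _ _
  have h1ev : ∀ᶠ t : ℝ in nhds (0 : ℝ), |t| ≤ 1 := by
    filter_upwards [Metric.ball_mem_nhds (0 : ℝ) one_pos] with t ht
    rw [Metric.mem_ball, Real.dist_eq, sub_zero] at ht
    exact ht.le
  have hO1 : (fun t : ℝ =>
      NormedSpace.exp (t • B) i j - t ^ n * (B ^ n) i j / (n.factorial : ℝ))
      =O[nhds (0 : ℝ)] (fun t => t ^ (n + 1)) := by
    rw [Asymptotics.isBigO_iff]
    refine ⟨M, ?_⟩
    filter_upwards [h1ev] with t ht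
    have hb : t ^ n * (B ^ n) i j / (n.factorial : ℝ) = t ^ n * b n := by
      rw [hbdef]; ring
    rw [Real.norm_eq_abs, Real.norm_eq_abs, hb, key t, abs_pow]
    exact hbound t ht
  refine ⟨hO1, ?_⟩
  have hO2 : (fun t : ℝ => t ^ (n + 1)) =O[nhds (0 : ℝ)] fun t => t ^ n := by
    rw [Asymptotics.isBigO_iff]
    refine ⟨1, ?_⟩
    filter_upwards [h1ev] with t ht
    rw [Real.norm_eq_abs, Real.norm_eq_abs, abs_pow, abs_pow, pow_succ, one_mul]
    exact mul_le_of_le_one_right (pow_nonneg (abs_nonneg t) n) ht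
  have hO3 : (fun t : ℝ => t ^ n * (B ^ n) i j / (n.factorial : ℝ))
      =O[nhds (0 : ℝ)] fun t => t ^ n := by
    rw [Asymptotics.isBigO_iff]
    refine ⟨|(B ^ n) i j / (n.factorial : ℝ)|, ?_⟩
    filter_upwards with t
    rw [Real.norm_eq_abs, Real.norm_eq_abs, mul_div_assoc, abs_mul, mul_comm]
  have hsum4 := (hO1.trans hO2).add hO3
  have heq : (fun t : ℝ =>
      (NormedSpace.exp (t • B) i j - t ^ n * (B ^ n) i j / (n.factorial : ℝ))
        + t ^ n * (B ^ n) i j / (n.factorial : ℝ))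
      = fun t : ℝ => NormedSpace.exp (t • B) i j := by
    funext t; ring
  rwa [heq] at hsum4

end Paper
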